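/- Let d ≥ 2 be an integer and let p ∈ (0, 1/d). Then there exist constants C1, C2 > 0 such that for every integer i ≥ 1, Σ_{k=1}^∞ (d+1)·d^{k−1}·(1 − (1 − p^k)^i) ≤ C1 · i^{log d / log(1/p)} + C2. -/

import Mathlib

/-- For d ≥ 2 and p ∈ (0, 1/d), there are constants C1, C2 > 0 such that for every
i ≥ 1, Σ_{k=1}^∞ (d+1)d^{k−1}(1 − (1 − pᵏ)ⁱ) ≤ C1 · i^{log d / log(1/p)} + C2. -/
theorem frog_mean_cluster_bound (d : ℕ) (hd : 2 ≤ d) (p : ℝ)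
    (hp : p ∈ Set.Ioo (0 : ℝ) (1 / (d : ℝ))) :
    ∃ C1 : ℝ, 0 < C1 ∧ ∃ C2 : ℝ, 0 < C2 ∧ ∀ i : ℕ, 1 ≤ i →
      (∑' k : ℕ, ((d : ℝ) + 1) * (d : ℝ) ^ k * (1 - (1 - p ^ (k + 1)) ^ i)) ≤
        C1 * (i : ℝ) ^ (Real.log (d : ℝ) / Real.log (1 / p)) + C2 := by
  obtain ⟨hp0, hpd⟩ := hp
  have hD2 : (2 : ℝ) ≤ (d : ℝ) := by exact_mod_cast hd
  set D : ℝ := (d : ℝ) with hDdef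
  have hD0 : (0 : ℝ) < D := by linarith
  have hdp : D * p < 1 := by
    rw [lt_div_iff₀ hD0] at hpd; linarith
  have h1dp : 0 < 1 - D * p := by linarith
  have hp1 : p < 1 := by
    have h12 : (1:ℝ)/D ≤ 1/2 := by
      apply one_div_le_one_div_of_le <;> linarith
    linarith
  have hlogp : 0 < Real.log (1/p) := Real.log_pos (by rw [lt_div_iff₀ hp0]; linarith)
  have hlogd : 0 < Real.log D := Real.log_pos (by linarith)
  set α := Real.log D / Real.log (1/p) with hα
  have hC1pos : 0 < (D+1)*D*(1 + p/(1 - D*p)) := by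
    have : 0 ≤ p/(1 - D*p) := div_nonneg hp0.le h1dp.le
    have h1 : 0 < 1 + p/(1 - D*p) := by linarith
    positivity
  refine ⟨(D+1)*D*(1 + p/(1 - D*p)), hC1pos, 1, one_pos, ?_⟩
  intro i hi
  have hi0 : (0:ℝ) < i := by exact_mod_cast hi
  have hi1 : (1:ℝ) ≤ i := by exact_mod_cast hi
  set x := Real.log i / Real.log (1/p) with hxdef
  have hx0 : 0 ≤ x := div_nonneg (Real.log_nonneg hi1) hlogp.le
  set K := ⌈x⌉₊ with hK
  -- i * p^K ≤ 1
  have hipK : (i:ℝ) * p ^ K ≤ 1 := by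
    have h1 : Real.log i ≤ K * Real.log (1/p) := by
      have := Nat.le_ceil x
      calc Real.log i = x * Real.log (1/p) := by
            rw [hxdef]; field_simp
        _ ≤ K * Real.log (1/p) := by
            exact mul_le_mul_of_nonneg_right this hlogp.le
    have h2 : (i:ℝ) ≤ (1/p) ^ K := by
      calc (i:ℝ) = Real.exp (Real.log i) := (Real.exp_log hi0).symm
        _ ≤ Real.exp (K * Real.log (1/p)) := Real.exp_le_exp.mpr h1
        _ = (1/p) ^ K := by rw [Real.exp_nat_mul, Real.exp_log (by positivity)]
    have h3 : (i:ℝ) * p ^ K ≤ (1/p) ^ K * p ^ K :=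
      mul_le_mul_of_nonneg_right h2 (pow_nonneg hp0.le K)
    have h4 : (1/p : ℝ) ^ K * p ^ K = 1 := by
      rw [← mul_pow]; field_simp; exact one_pow K
    linarith
  -- d^K ≤ D * i^α
  have hdK : D ^ K ≤ D * (i:ℝ) ^ α := by
    have hKle : (K:ℝ) ≤ x + 1 := (Nat.ceil_lt_add_one hx0).le
    have hxl : x * Real.log D = Real.log i * α := by
      rw [hxdef, hα]; ring
    calc D ^ K = Real.exp (K * Real.log D) := by
          rw [Real.exp_nat_mul, Real.exp_log hD0]
      _ ≤ Real.exp ((x+1) * Real.log D) :=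
          Real.exp_le_exp.mpr (mul_le_mul_of_nonneg_right hKle hlogd.le)
      _ = D * (i:ℝ) ^ α := by
          rw [add_mul, one_mul, Real.exp_add, Real.exp_log hD0, hxl,
            Real.rpow_def_of_pos hi0]; ring
  -- the summand
  set f : ℕ → ℝ := fun k => (D + 1) * D ^ k * (1 - (1 - p ^ (k + 1)) ^ i) with hf
  have hpk1 : ∀ k : ℕ, 0 ≤ p ^ (k+1) ∧ p ^ (k+1) ≤ 1 := fun k =>
    ⟨pow_nonneg hp0.le _, pow_le_one₀ hp0.le hp1.le⟩
  have hfnn : ∀ k, 0 ≤ f k := by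
    intro k
    have h1 := hpk1 k
    have h2 : (1 - p ^ (k+1)) ^ i ≤ 1 := pow_le_one₀ (by linarith [h1.2]) (by linarith [h1.1])
    have h3 : (0:ℝ) ≤ (D+1) * D ^ k := by positivity
    have h4 : f k = (D + 1) * D ^ k * (1 - (1 - p ^ (k + 1)) ^ i) := rfl
    rw [h4]
    exact mul_nonneg h3 (by linarith)
  have hfle1 : ∀ k, f k ≤ (D + 1) * D ^ k := by
    intro k
    have h1 := hpk1 k
    have h2 : 0 ≤ (1 - p ^ (k+1)) ^ i := pow_nonneg (by linarith [h1.2]) i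
    have h3 : 1 - (1 - p ^ (k+1)) ^ i ≤ 1 := by linarith
    have h4 : (0:ℝ) ≤ (D+1) * D ^ k := by positivity
    calc f k ≤ (D+1) * D ^ k * 1 := mul_le_mul_of_nonneg_left h3 h4
      _ = (D+1) * D ^ k := mul_one _
  have hfle2 : ∀ k, f k ≤ (D + 1) * D ^ k * ((i:ℝ) * p ^ (k+1)) := by
    intro k
    have h1 := hpk1 k
    have hb := one_add_mul_le_pow (a := -p^(k+1)) (by linarith [h1.2]) i
    have h2 : 1 - (1 - p ^ (k+1)) ^ i ≤ (i:ℝ) * p ^ (k+1) := by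
      have : (1 + -p^(k+1)) ^ i = (1 - p^(k+1)) ^ i := by ring_nf
      nlinarith [hb]
    have h4 : (0:ℝ) ≤ (D+1) * D ^ k := by positivity
    exact mul_le_mul_of_nonneg_left h2 h4
  -- summability
  have hdp0 : (0:ℝ) ≤ D * p := by positivity
  have hgsum : Summable (fun k : ℕ => (D*p)^k) := summable_geometric_of_lt_one hdp0 hdp
  have hkey : ∀ k : ℕ, (D + 1) * D ^ k * ((i:ℝ) * p ^ (k+1)) = ((D+1)*(i:ℝ)*p) * (D*p)^k := by
    intro k; rw [pow_succ, mul_pow]; ring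
  have hfsum : Summable f := by
    apply Summable.of_nonneg_of_le hfnn (fun k => (hfle2 k).trans_eq (hkey k))
    exact hgsum.mul_left _
  -- split
  have hsplit := Summable.sum_add_tsum_nat_add (f := f) K hfsum
  -- head bound
  have hgeom : ∀ n : ℕ, ∑ k ∈ Finset.range n, D ^ k ≤ D ^ n := by
    intro n
    induction n with
    | zero => simp
    | succ n ih =>
      rw [Finset.sum_range_succ, pow_succ]
      have : (0:ℝ) < D ^ n := pow_pos hD0 n
      nlinarith
  have hhead : ∑ k ∈ Finset.range K, f k ≤ (D+1) * D ^ K := by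
    calc ∑ k ∈ Finset.range K, f k ≤ ∑ k ∈ Finset.range K, (D+1) * D ^ k :=
          Finset.sum_le_sum (fun k _ => hfle1 k)
      _ = (D+1) * ∑ k ∈ Finset.range K, D ^ k := by rw [Finset.mul_sum]
      _ ≤ (D+1) * D ^ K := mul_le_mul_of_nonneg_left (hgeom K) (by linarith)
  -- tail bound
  have htail : ∑' k : ℕ, f (k + K) ≤ (D+1) * p * D ^ K * (1 - D*p)⁻¹ := by
    have hsum2 : Summable (fun k : ℕ => ((D+1)*(i:ℝ)*p^(K+1)*D^K) * (D*p)^k) :=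
      hgsum.mul_left _
    have hle : ∀ k : ℕ, f (k + K) ≤ ((D+1)*(i:ℝ)*p^(K+1)*D^K) * (D*p)^k := by
      intro k
      calc f (k + K) ≤ (D + 1) * D ^ (k+K) * ((i:ℝ) * p ^ (k+K+1)) := hfle2 (k+K)
        _ = ((D+1)*(i:ℝ)*p^(K+1)*D^K) * (D*p)^k := by
            rw [pow_add, mul_pow, pow_add, pow_succ]
            ring
    calc ∑' k : ℕ, f (k + K)
        ≤ ∑' k : ℕ, ((D+1)*(i:ℝ)*p^(K+1)*D^K) * (D*p)^k :=
          Summable.tsum_le_tsum hle ((summable_nat_add_iff K).mpr hfsum) hsum2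
      _ = ((D+1)*(i:ℝ)*p^(K+1)*D^K) * (1 - D*p)⁻¹ := by
          rw [tsum_mul_left, tsum_geometric_of_lt_one hdp0 hdp]
      _ ≤ (D+1) * p * D ^ K * (1 - D*p)⁻¹ := by
          have h1 : (D+1)*(i:ℝ)*p^(K+1)*D^K ≤ (D+1) * p * D ^ K := by
            have h2 : (i:ℝ) * p^(K+1) ≤ p := by
              rw [pow_succ, ← mul_assoc]
              calc (i:ℝ) * p ^ K * p ≤ 1 * p :=
                mul_le_mul_of_nonneg_right hipK hp0.le
                _ = p := one_mul p
            have h3 : (0:ℝ) ≤ (D+1) * D^K := by positivity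
            calc (D+1)*(i:ℝ)*p^(K+1)*D^K = (D+1)*D^K * ((i:ℝ)*p^(K+1)) := by ring
              _ ≤ (D+1)*D^K * p := mul_le_mul_of_nonneg_left h2 h3
              _ = (D+1) * p * D ^ K := by ring
          exact mul_le_mul_of_nonneg_right h1 (inv_nonneg.mpr h1dp.le)
  -- combine
  have hmain : ∑' k : ℕ, f k ≤ (D+1)*(1 + p/(1-D*p)) * D ^ K := by
    have : ∑' k : ℕ, f k = ∑ k ∈ Finset.range K, f k + ∑' k : ℕ, f (k + K) := hsplit.symm
    rw [this]
    have heq : (D+1)*(1 + p/(1-D*p)) * D ^ K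
        = (D+1) * D ^ K + (D+1) * p * D ^ K * (1 - D*p)⁻¹ := by
      field_simp
    rw [heq]
    exact add_le_add hhead htail
  calc ∑' k : ℕ, (D + 1) * D ^ k * (1 - (1 - p ^ (k + 1)) ^ i)
      = ∑' k : ℕ, f k := rfl
    _ ≤ (D+1)*(1 + p/(1-D*p)) * D ^ K := hmain
    _ ≤ (D+1)*(1 + p/(1-D*p)) * (D * (i:ℝ) ^ α) := by
        have h1 : 0 ≤ p/(1 - D*p) := div_nonneg hp0.le h1dp.le
        have h2 : (0:ℝ) ≤ (D+1)*(1 + p/(1-D*p)) := mul_nonneg (by linarith) (by linarith)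
        exact mul_le_mul_of_nonneg_left hdK h2
    _ = (D+1)*D*(1 + p/(1 - D*p)) * (i:ℝ) ^ α := by ring
    _ ≤ (D+1)*D*(1 + p/(1 - D*p)) * (i:ℝ) ^ α + 1 := by linarith
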